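/- arXiv:1709.07710 — 2 statements merged into one kernel-verified Lean document; each statement's English description precedes it below -/
import Mathlib

section
/- (Pointwise Peskun optimality of Metropolis–Hastings.) Let X be a set, π : X → (0,∞), q : X × X → (0,∞), and let a : X × X → [0,1] be any acceptance function satisfying the detailed balance condition π(θ)q(θ,φ)a(θ,φ) = π(φ)q(φ,θ)a(φ,θ) for all θ, φ ∈ X. Then for all θ, φ ∈ X, a(θ,φ) ≤ α_MH(θ,φ), where α_MH(θ,φ) = min(1, π(φ)q(φ,θ)/(π(θ)q(θ,φ))). -/
/-- Pointwise Peskun optimality of Metropolis–Hastings: any acceptance function `a`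
with values in `[0,1]` satisfying detailed balance is dominated pointwise by the
Metropolis–Hastings acceptance probability. -/
theorem mh_pointwise_optimal {X : Type*} (pd : X → ℝ) (q : X → X → ℝ)
    (hpd : ∀ θ, 0 < pd θ) (hq : ∀ θ φ, 0 < q θ φ)
    (a : X → X → ℝ) (ha0 : ∀ θ φ, 0 ≤ a θ φ) (ha1 : ∀ θ φ, a θ φ ≤ 1)
    (hdb : ∀ θ φ, pd θ * q θ φ * a θ φ = pd φ * q φ θ * a φ θ) :
    ∀ θ φ : X, a θ φ ≤ min 1 (pd φ * q φ θ / (pd θ * q θ φ)) := by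
  intro θ φ
  refine le_min (ha1 θ φ) ?_
  rw [le_div_iff₀ (mul_pos (hpd θ) (hq θ φ))]
  calc a θ φ * (pd θ * q θ φ) = pd θ * q θ φ * a θ φ := by ring
    _ = pd φ * q φ θ * a φ θ := hdb θ φ
    _ ≤ pd φ * q φ θ * 1 := by
        exact mul_le_mul_of_nonneg_left (ha1 φ θ) (mul_pos (hpd φ) (hq φ θ)).le
    _ = pd φ * q φ θ := by ring
end

section
/- Let θ₁, θ₂ > 0 with 1/2 < θ₁ < 3/2, set A = θ₁ − θ₂ and B = θ₁ + θ₂ − 1, and define α(u) = (A + B·cos u)/(2·sin u) for u ∈ (0,π). Then the function u ↦ α(u)² + α′(u) is not bounded below on (0,π), i.e. the set {α(u)² + α′(u) : u ∈ (0,π)} is not bounded below in ℝ. -/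
open Real Filter Set

lemma wf_deriv_formula (A B : ℝ) (α : ℝ → ℝ)
    (hα : ∀ u, α u = (A + B * Real.cos u) / (2 * Real.sin u))
    (u : ℝ) (hu : Real.sin u ≠ 0) :
    deriv α u = ((-(B * Real.sin u)) * (2 * Real.sin u)
      - (A + B * Real.cos u) * (2 * Real.cos u)) / (2 * Real.sin u) ^ 2 := by
  have hfun : α = fun u => (A + B * Real.cos u) / (2 * Real.sin u) := funext hα
  have hg : HasDerivAt (fun u => A + B * Real.cos u) (-(B * Real.sin u)) u := by
    simpa [mul_comm] using ((Real.hasDerivAt_cos u).const_mul B).const_add A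
  have hh : HasDerivAt (fun u => 2 * Real.sin u) (2 * Real.cos u) u :=
    (Real.hasDerivAt_sin u).const_mul 2
  have h2 : (2 : ℝ) * Real.sin u ≠ 0 := by simp [hu]
  have := (hg.div hh h2).deriv
  rw [hfun]
  exact this

/-- For `1/2 < θ₁ < 3/2`, the function `α² + α'` associated with the
Lamperti-transformed Wright–Fisher drift is not bounded below on `(0,π)`. -/
theorem wf_drift_not_bddBelow (θ₁ θ₂ : ℝ) (h₁ : 0 < θ₁) (h₂ : 0 < θ₂)
    (h₁l : 1 / 2 < θ₁) (h₁u : θ₁ < 3 / 2)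
    (A B : ℝ) (hA : A = θ₁ - θ₂) (hB : B = θ₁ + θ₂ - 1)
    (α : ℝ → ℝ) (hα : ∀ u, α u = (A + B * Real.cos u) / (2 * Real.sin u)) :
    ¬ BddBelow ((fun u : ℝ => α u ^ 2 + deriv α u) '' Set.Ioo 0 Real.pi) := by
  set N : ℝ → ℝ := fun u => (A + B * Real.cos u) ^ 2 - 2 * B * (Real.sin u) ^ 2
    - 2 * (A + B * Real.cos u) * Real.cos u with hN
  set D : ℝ → ℝ := fun u => 4 * (Real.sin u) ^ 2 with hD
  -- on (0,π) the function equals N/D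
  have key : ∀ u ∈ Set.Ioo 0 Real.pi, α u ^ 2 + deriv α u = N u * (D u)⁻¹ := by
    intro u hu
    have hs : 0 < Real.sin u := Real.sin_pos_of_pos_of_lt_pi hu.1 hu.2
    have hs' : Real.sin u ≠ 0 := ne_of_gt hs
    rw [hα u, wf_deriv_formula A B α hα u hs', hN, hD]
    field_simp
    ring
  -- N tends to a negative limit at 0
  have hNlim : Filter.Tendsto N (nhdsWithin 0 (Set.Ioo 0 Real.pi))
      (nhds ((A + B) ^ 2 - 2 * (A + B))) := by
    have : Continuous N := by
      fun_prop
    have := this.continuousAt (x := (0:ℝ))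
    have h0 : N 0 = (A + B) ^ 2 - 2 * (A + B) := by simp [hN]
    have h1 := this.continuousWithinAt (s := Set.Ioo 0 Real.pi) (x := (0:ℝ))
    rw [ContinuousWithinAt, h0] at h1
    exact h1
  have hneg : (A + B) ^ 2 - 2 * (A + B) < 0 := by
    rw [hA, hB]; nlinarith
  -- 1/D tends to +∞
  have hDlim : Filter.Tendsto (fun u => (D u)⁻¹) (nhdsWithin 0 (Set.Ioo 0 Real.pi))
      Filter.atTop := by
    apply Filter.Tendsto.inv_tendsto_nhdsGT_zero
    rw [tendsto_nhdsWithin_iff]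
    constructor
    · have : Continuous D := by fun_prop
      have := this.continuousAt (x := (0:ℝ))
      have h0 : D 0 = 0 := by simp [hD]
      have h1 := this.continuousWithinAt (s := Set.Ioo 0 Real.pi) (x := (0:ℝ))
      rw [ContinuousWithinAt, h0] at h1
      exact h1
    · filter_upwards [self_mem_nhdsWithin] with u hu
      have hs : 0 < Real.sin u := Real.sin_pos_of_pos_of_lt_pi hu.1 hu.2
      have : 0 < D u := by simp only [hD]; positivity
      exact this
  have hBot : Filter.Tendsto (fun u => N u * (D u)⁻¹)
      (nhdsWithin 0 (Set.Ioo 0 Real.pi)) Filter.atBot :=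
    Filter.Tendsto.neg_mul_atTop hneg hNlim hDlim
  -- the filter is nontrivial
  haveI : (nhdsWithin (0:ℝ) (Set.Ioo 0 Real.pi)).NeBot := by
    rw [← mem_closure_iff_nhdsWithin_neBot, closure_Ioo (ne_of_lt Real.pi_pos)]
    exact ⟨le_refl 0, le_of_lt Real.pi_pos⟩
  intro hbdd
  obtain ⟨m, hm⟩ := hbdd
  have h1 : ∀ᶠ u in nhdsWithin 0 (Set.Ioo 0 Real.pi), N u * (D u)⁻¹ < m :=
    hBot.eventually_lt_atBot m
  have h2 : ∀ᶠ u in nhdsWithin 0 (Set.Ioo 0 Real.pi), u ∈ Set.Ioo 0 Real.pi :=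
    self_mem_nhdsWithin
  obtain ⟨u, hlt, hu⟩ := (h1.and h2).exists
  have : m ≤ α u ^ 2 + deriv α u := hm ⟨u, hu, rfl⟩
  rw [key u hu] at this
  linarith
end
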